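/- The line graph of the complete bipartite graph K(n,2), for n ≥ 3, is an n-regular 2-variegated graph on 2n vertices whose adjacency matrix has eigenvalues n, n−2, 0, and −2. -/

import Mathlib

open SimpleGraph
open scoped Classical

/-- A graph is 2-variegated (bivariegated) if its vertex set can be partitioned into
two equinumerous parts such that every vertex is adjacent to exactly one vertex
of the part not containing it. -/
def SimpleGraph.IsBivariegated {V : Type*} (G : SimpleGraph V) : Prop :=
  ∃ f : V → Bool,
    Nonempty ({v // f v = true} ≃ {v // f v = false}) ∧
    ∀ v : V, ∃! w : V, f w ≠ f v ∧ G.Adj v w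

namespace LineKn2Aux

open Matrix Polynomial

/-! ### The rook graph `K_n □ K_2` and auxiliary matrices -/

def Hg (n : ℕ) : SimpleGraph (Fin n × Fin 2) where
  Adj p q := p ≠ q ∧ (p.1 = q.1 ∨ p.2 = q.2)
  symm := ⟨by rintro p q ⟨h1, h2⟩; exact ⟨h1.symm, by tauto⟩⟩
  loopless := ⟨by rintro p ⟨h, -⟩; exact h rfl⟩

def Pm (n : ℕ) : Matrix (Fin n × Fin 2) (Fin n × Fin 2) ℝ :=
  Matrix.of fun p q => if p.1 = q.1 then 1 else 0

def Qm (n : ℕ) : Matrix (Fin n × Fin 2) (Fin n × Fin 2) ℝ :=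
  Matrix.of fun p q => if p.2 = q.2 then 1 else 0

def Jm (n : ℕ) : Matrix (Fin n × Fin 2) (Fin n × Fin 2) ℝ :=
  Matrix.of fun _ _ => 1

variable (n : ℕ)

lemma hPP : Pm n * Pm n = (2:ℝ) • Pm n := by
  ext ⟨i,j⟩ ⟨i',j'⟩
  simp [Pm, Matrix.mul_apply, Fintype.sum_prod_type, ite_mul, Finset.sum_ite_eq,
    Finset.sum_ite_eq']
  split <;> simp

lemma hQQ : Qm n * Qm n = (n:ℝ) • Qm n := by
  ext ⟨i,j⟩ ⟨i',j'⟩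
  simp [Qm, Matrix.mul_apply, Fintype.sum_prod_type, ite_mul, Finset.sum_ite_eq,
    Finset.sum_ite_eq', mul_comm]
  split <;> simp

lemma hPQ : Pm n * Qm n = Jm n := by
  ext ⟨i,j⟩ ⟨i',j'⟩
  simp [Pm, Qm, Jm, Matrix.mul_apply, Fintype.sum_prod_type, ite_mul, mul_ite,
    Finset.sum_ite_eq, Finset.sum_ite_eq']

lemma hQP : Qm n * Pm n = Jm n := by
  ext ⟨i,j⟩ ⟨i',j'⟩
  simp [Pm, Qm, Jm, Matrix.mul_apply, Fintype.sum_prod_type, ite_mul, mul_ite,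
    Finset.sum_ite_eq, Finset.sum_ite_eq']

lemma hJP : Jm n * Pm n = (2:ℝ) • Jm n := by
  ext ⟨i,j⟩ ⟨i',j'⟩
  rw [Matrix.mul_apply, Fintype.sum_prod_type]
  simp [Jm, Pm, Finset.sum_ite_eq', Finset.sum_const, Finset.card_univ, mul_ite]

lemma hJQ : Jm n * Qm n = (n:ℝ) • Jm n := by
  ext ⟨i,j⟩ ⟨i',j'⟩
  rw [Matrix.mul_apply, Fintype.sum_prod_type]
  simp [Jm, Qm, Finset.sum_ite_eq', Finset.sum_const, Finset.card_univ, mul_ite]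

noncomputable def Am (n : ℕ) : Matrix (Fin n × Fin 2) (Fin n × Fin 2) ℝ :=
  Pm n + Qm n - (2:ℝ) • 1

lemma hAdj : (Hg n).adjMatrix ℝ = Am n := by
  ext ⟨i,j⟩ ⟨i',j'⟩
  by_cases h1 : i = i' <;> by_cases h2 : j = j' <;>
    simp [Hg, Pm, Qm, Am, Matrix.one_apply, Prod.ext_iff, h1, h2, SimpleGraph.adjMatrix] <;>
    norm_num

lemma key : (Pm n + Qm n) * (Pm n + Qm n - (2:ℝ)•1) * (Pm n + Qm n - (n:ℝ)•1) *
    (Pm n + Qm n - ((n:ℝ)+2)•1) = 0 := by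
  have e1 : (Pm n + Qm n) * (Pm n + Qm n - (2:ℝ)•1) = (2:ℝ)•Jm n + ((n:ℝ)-2)•Qm n := by
    simp only [mul_sub, mul_add, add_mul, mul_smul_comm, mul_one, hPP, hPQ, hQP, hQQ]
    module
  have e2 : ((2:ℝ)•Jm n + ((n:ℝ)-2)•Qm n) * (Pm n + Qm n - (n:ℝ)•1)
      = ((n:ℝ)+2)•Jm n := by
    simp only [mul_sub, mul_add, add_mul, smul_mul_assoc, mul_smul_comm, mul_one,
      hJP, hJQ, hQP, hQQ]
    module
  have e3 : (((n:ℝ)+2)•Jm n) * (Pm n + Qm n - ((n:ℝ)+2)•1) = 0 := by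
    simp only [mul_sub, mul_add, smul_mul_assoc, mul_smul_comm, mul_one, hJP, hJQ]
    module
  rw [e1, e2, e3]

noncomputable def qpoly (n : ℕ) : Polynomial ℝ :=
  (X + C 2) * X * (X - C ((n:ℝ) - 2)) * (X - C (n:ℝ))

lemma keyAm : (Am n + (2:ℝ)•1) * Am n * (Am n - ((n:ℝ)-2)•1) * (Am n - (n:ℝ)•1) = 0 := by
  have e0 : Am n + (2:ℝ)•1 = Pm n + Qm n := by rw [Am]; abel
  have e2 : Am n - ((n:ℝ)-2)•(1 : Matrix (Fin n × Fin 2) (Fin n × Fin 2) ℝ)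
      = Pm n + Qm n - (n:ℝ)•1 := by rw [Am]; module
  have e3 : Am n - (n:ℝ)•(1 : Matrix (Fin n × Fin 2) (Fin n × Fin 2) ℝ)
      = Pm n + Qm n - ((n:ℝ)+2)•1 := by rw [Am]; module
  rw [e0, e2, e3]
  exact key n

lemma aeval_qpoly : Polynomial.aeval (Am n) (qpoly n) = 0 := by
  have hsplit : ((n:ℝ) - 2) • (1 : Matrix (Fin n × Fin 2) (Fin n × Fin 2) ℝ)
      = (n:ℝ)•1 - (2:ℝ)•1 := sub_smul _ _ _
  simp only [qpoly, _root_.map_mul, _root_.map_add, _root_.map_sub, Polynomial.aeval_X,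
    Polynomial.aeval_C, Algebra.algebraMap_eq_smul_one]
  rw [← hsplit]
  exact keyAm n

/-! ### Row-sum and eigenvector computations -/

lemma hPmv (v : Fin n × Fin 2 → ℝ) (i : Fin n) (j : Fin 2) :
    (Pm n *ᵥ v) (i, j) = ∑ l, v (i, l) := by
  rw [Matrix.mulVec, dotProduct, Fintype.sum_prod_type]
  simp [Pm, ite_mul, Finset.sum_ite_eq, Finset.sum_ite_eq']

lemma hQmv (v : Fin n × Fin 2 → ℝ) (i : Fin n) (j : Fin 2) :
    (Qm n *ᵥ v) (i, j) = ∑ k, v (k, j) := by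
  rw [Matrix.mulVec, dotProduct, Fintype.sum_prod_type]
  simp [Qm, ite_mul, Finset.sum_ite_eq, Finset.sum_ite_eq', Finset.sum_comm]

lemma hAmv (v : Fin n × Fin 2 → ℝ) (i : Fin n) (j : Fin 2) :
    (Am n *ᵥ v) (i, j) = (∑ l, v (i, l)) + (∑ k, v (k, j)) - 2 * v (i, j) := by
  simp [Am, Matrix.sub_mulVec, Matrix.add_mulVec, Matrix.smul_mulVec, Matrix.one_mulVec,
    hPmv, hQmv]

noncomputable def wv (n : ℕ) : Fin n → ℝ :=
  fun i => (if (i:ℕ) = 0 then 1 else 0) - (if (i:ℕ) = 1 then 1 else 0)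

lemma wv_sum (hn : 3 ≤ n) : ∑ i, wv n i = 0 := by
  simp only [wv]
  rw [Fin.sum_univ_eq_sum_range (fun k => (if k = 0 then (1:ℝ) else 0) - (if k = 1 then 1 else 0))]
  rw [Finset.sum_sub_distrib]
  rw [Finset.sum_ite_eq' (Finset.range n) 0, Finset.sum_ite_eq' (Finset.range n) 1]
  have h0 : 0 < n := by omega
  have h1 : 1 < n := by omega
  simp [Finset.mem_range, h0, h1]

lemma eig1 : Am n *ᵥ (fun _ => (1:ℝ)) = (n:ℝ) • (fun _ => (1:ℝ)) := by
  funext ⟨i, j⟩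
  rw [hAmv]
  simp [Fin.sum_univ_two]

lemma eig2 : Am n *ᵥ (fun p => if p.2 = 0 then (1:ℝ) else -1)
    = ((n:ℝ) - 2) • (fun p => if p.2 = 0 then (1:ℝ) else -1) := by
  funext p
  obtain ⟨i, j⟩ := p
  rw [hAmv]
  fin_cases j <;> simp [Fin.sum_univ_two, Finset.sum_const, Finset.card_univ] <;> ring

lemma eig3 (hn : 3 ≤ n) : Am n *ᵥ (fun p => wv n p.1) = (0:ℝ) • (fun p => wv n p.1) := by
  funext p
  obtain ⟨i, j⟩ := p
  rw [hAmv]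
  simp [Fin.sum_univ_two, wv_sum n hn]

lemma eig4 (hn : 3 ≤ n) : Am n *ᵥ (fun p => wv n p.1 * (if p.2 = 0 then 1 else -1))
    = (-2:ℝ) • (fun p => wv n p.1 * (if p.2 = 0 then 1 else -1)) := by
  funext p
  obtain ⟨i, j⟩ := p
  rw [hAmv]
  fin_cases j <;> simp [Fin.sum_univ_two, wv_sum n hn] <;> ring

/-! ### Spectrum of `Am` -/

lemma mem_spec {ι : Type*} [Fintype ι] [DecidableEq ι] {M : Matrix ι ι ℝ} {μ : ℝ}
    {v : ι → ℝ} (hv : v ≠ 0) (h : M *ᵥ v = μ • v) : μ ∈ spectrum ℝ M := by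
  rw [spectrum.mem_iff]
  intro hU
  rw [Matrix.isUnit_iff_isUnit_det, isUnit_iff_ne_zero] at hU
  apply hU
  rw [← Matrix.exists_mulVec_eq_zero_iff]
  refine ⟨v, hv, ?_⟩
  rw [Algebra.algebraMap_eq_smul_one, Matrix.sub_mulVec, Matrix.smul_mulVec,
    Matrix.one_mulVec, h, sub_self]

lemma spec_Am (hn : 3 ≤ n) :
    spectrum ℝ (Am n) = {(n:ℝ), (n:ℝ) - 2, 0, -2} := by
  have hi0 : (0:ℕ) < n := by omega
  let i0 : Fin n := ⟨0, hi0⟩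
  haveI : Nonempty (Fin n × Fin 2) := ⟨(i0, 0)⟩
  apply Set.eq_of_subset_of_subset
  · intro μ hμ
    have h1 := spectrum.subset_polynomial_aeval (Am n) (qpoly n) ⟨μ, hμ, rfl⟩
    rw [aeval_qpoly, spectrum.zero_eq] at h1
    simp only [qpoly, Polynomial.eval_mul, Polynomial.eval_add, Polynomial.eval_sub,
      Polynomial.eval_X, Polynomial.eval_C, Set.mem_singleton_iff] at h1
    simp only [Set.mem_insert_iff, Set.mem_singleton_iff]
    rcases mul_eq_zero.mp h1 with h | h
    · rcases mul_eq_zero.mp h with h | h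
      · rcases mul_eq_zero.mp h with h | h
        · right; right; right; linarith
        · right; right; left; exact h
      · right; left; linarith
    · left; linarith
  · intro μ hμ
    simp only [Set.mem_insert_iff, Set.mem_singleton_iff] at hμ
    rcases hμ with rfl | rfl | rfl | rfl
    · exact mem_spec (fun h => by simpa using congrFun h (i0, 0)) (eig1 n)
    · exact mem_spec (fun h => by simpa using congrFun h (i0, 0)) (eig2 n)
    · refine mem_spec (fun h => ?_) (eig3 n hn)
      have := congrFun h (i0, 0)
      simp [wv, i0] at this
    · refine mem_spec (fun h => ?_) (eig4 n hn)
      have := congrFun h (i0, 0)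
      simp [wv, i0] at this

/-! ### The identification of the line graph with `Hg` -/

def gE (n : ℕ) (p : Fin n × Fin 2) : (completeBipartiteGraph (Fin n) (Fin 2)).edgeSet :=
  ⟨s(Sum.inl p.1, Sum.inr p.2), by simp [completeBipartiteGraph]⟩

lemma gE_bij : Function.Bijective (gE n) := by
  constructor
  · rintro ⟨i, j⟩ ⟨i', j'⟩ h
    simp only [gE, Subtype.ext_iff, Subtype.mk.injEq, Sym2.eq_iff, Prod.mk.injEq,
      Sum.inl.injEq, Sum.inr.injEq] at h
    rcases h with ⟨h1, h2⟩ | ⟨h1, h2⟩ <;> simp_all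
  · rintro ⟨e, he⟩
    induction e using Sym2.ind with
    | _ a b =>
      rw [SimpleGraph.mem_edgeSet] at he
      cases a <;> cases b <;> simp [completeBipartiteGraph] at he
      · exact ⟨(_, _), rfl⟩
      · exact ⟨(_, _), Subtype.ext (Sym2.eq_swap)⟩

lemma adj_gE (p q : Fin n × Fin 2) :
    (completeBipartiteGraph (Fin n) (Fin 2)).lineGraph.Adj (gE n p) (gE n q) ↔ (Hg n).Adj p q := by
  rw [SimpleGraph.lineGraph_adj_iff_exists]
  constructor
  · rintro ⟨hne, v, hv1, hv2⟩
    refine ⟨fun h => hne (by rw [h]), ?_⟩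
    simp only [gE, Sym2.mem_iff] at hv1 hv2
    rcases hv1 with h1 | h1 <;> rcases hv2 with h2 | h2 <;> subst h1 <;> simp_all
  · rintro ⟨hne, h | h⟩
    · refine ⟨fun hc => hne ((gE_bij n).1 hc), Sum.inl p.1, ?_, ?_⟩ <;> simp [gE, h]
    · refine ⟨fun hc => hne ((gE_bij n).1 hc), Sum.inr p.2, ?_, ?_⟩ <;> simp [gE, h]

noncomputable def eE (n : ℕ) :
    (Fin n × Fin 2) ≃ (completeBipartiteGraph (Fin n) (Fin 2)).edgeSet :=
  Equiv.ofBijective (gE n) (gE_bij n)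

lemma gE_eE_symm (s : (completeBipartiteGraph (Fin n) (Fin 2)).edgeSet) :
    gE n ((eE n).symm s) = s := (eE n).apply_symm_apply s

lemma lineAdj_iff (s t : (completeBipartiteGraph (Fin n) (Fin 2)).edgeSet) :
    (completeBipartiteGraph (Fin n) (Fin 2)).lineGraph.Adj s t
      ↔ (Hg n).Adj ((eE n).symm s) ((eE n).symm t) := by
  conv_lhs => rw [← gE_eE_symm n s, ← gE_eE_symm n t]
  exact adj_gE n _ _

lemma lineAdjMatrix :
    (completeBipartiteGraph (Fin n) (Fin 2)).lineGraph.adjMatrix ℝ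
      = Matrix.reindexAlgEquiv ℝ ℝ (eE n) (Am n) := by
  ext s t
  rw [Matrix.reindexAlgEquiv_apply, Matrix.reindex_apply]
  simp only [Matrix.submatrix_apply, ← hAdj, SimpleGraph.adjMatrix_apply]
  rw [if_congr (lineAdj_iff n s t) rfl rfl]

end LineKn2Aux

open LineKn2Aux Matrix

theorem lineGraph_completeBipartite_n_two (n : ℕ) (hn : 3 ≤ n) :
    Fintype.card (completeBipartiteGraph (Fin n) (Fin 2)).edgeSet = 2 * n ∧
    ((completeBipartiteGraph (Fin n) (Fin 2)).lineGraph).IsRegularOfDegree n ∧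
    ((completeBipartiteGraph (Fin n) (Fin 2)).lineGraph).IsBivariegated ∧
    spectrum ℝ (((completeBipartiteGraph (Fin n) (Fin 2)).lineGraph).adjMatrix ℝ)
      = {(n : ℝ), (n : ℝ) - 2, 0, -2} := by
  refine ⟨?_, ?_, ?_, ?_⟩
  · rw [← Fintype.card_congr (eE n)]
    simp [mul_comm]
  · -- regularity
    intro v
    have h1 := SimpleGraph.adjMatrix_mulVec_const_apply
      (G := (completeBipartiteGraph (Fin n) (Fin 2)).lineGraph) (α := ℝ) (a := 1) (v := v)
    rw [mul_one] at h1
    have h2 : ((completeBipartiteGraph (Fin n) (Fin 2)).lineGraph.adjMatrix ℝ *ᵥ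
        Function.const _ 1) v = (n : ℝ) := by
      rw [lineAdjMatrix n, Matrix.reindexAlgEquiv_apply, Matrix.reindex_apply]
      rw [Matrix.mulVec, dotProduct]
      simp only [Matrix.submatrix_apply, Function.const_apply, mul_one]
      rw [Equiv.sum_comp (eE n).symm (fun q => Am n ((eE n).symm v) q)]
      have := congrFun (eig1 n) ((eE n).symm v)
      simp only [Matrix.mulVec, dotProduct, mul_one, Pi.smul_apply,
        smul_eq_mul] at this
      simpa using this
    rw [h1] at h2
    exact_mod_cast h2
  · -- bivariegated
    refine ⟨fun v => decide (((eE n).symm v).2 = 0), ⟨?_⟩, ?_⟩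
    · -- equinumerous parts
      have ht : {v // decide (((eE n).symm v).2 = 0) = true} ≃ Fin n :=
        { toFun := fun v => ((eE n).symm v.1).1
          invFun := fun i => ⟨eE n (i, 0), by simp⟩
          left_inv := by
            rintro ⟨v, hv⟩
            have hv' : ((eE n).symm v).2 = 0 := by simpa using hv
            ext
            have : ((((eE n).symm v).1 : Fin n), (0 : Fin 2)) = (eE n).symm v := by
              rw [← hv']
            simp only [Equiv.symm_apply_apply, this, Equiv.apply_symm_apply]
          right_inv := by intro i; simp }
      have hf : {v // decide (((eE n).symm v).2 = 0) = false} ≃ Fin n :=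
        { toFun := fun v => ((eE n).symm v.1).1
          invFun := fun i => ⟨eE n (i, 1), by simp⟩
          left_inv := by
            rintro ⟨v, hv⟩
            have hv' : ((eE n).symm v).2 = 1 := by
              have : ¬ ((eE n).symm v).2 = 0 := by simpa using hv
              omega
            ext
            have : ((((eE n).symm v).1 : Fin n), (1 : Fin 2)) = (eE n).symm v := by
              rw [← hv']
            simp only [Equiv.symm_apply_apply, this, Equiv.apply_symm_apply]
          right_inv := by intro i; simp }
      exact ht.trans hf.symm
    · -- unique cross neighbor
      intro v
      refine ⟨eE n (((eE n).symm v).1, ((eE n).symm v).2 + 1), ⟨?_, ?_⟩, ?_⟩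
      · simp only [Equiv.symm_apply_apply]
        have : ∀ j : Fin 2, decide (j + 1 = 0) ≠ decide (j = 0) := by decide
        exact this _
      · rw [lineAdj_iff n]
        simp only [Equiv.symm_apply_apply]
        refine ⟨?_, Or.inl rfl⟩
        have : ∀ j : Fin 2, j + 1 ≠ j := by decide
        intro h
        exact this _ (congrArg Prod.snd h.symm)
      · rintro w ⟨hfw, hadj⟩
        rw [lineAdj_iff n] at hadj
        obtain ⟨hne, hor⟩ := hadj
        have hsnd : ((eE n).symm w).2 ≠ ((eE n).symm v).2 := by
          intro h
          apply hfw
          simp [h]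
        have hfst : ((eE n).symm w).1 = ((eE n).symm v).1 := by
          rcases hor with h | h
          · exact h.symm
          · exact absurd h.symm hsnd
        have h2 : ((eE n).symm w).2 = ((eE n).symm v).2 + 1 := by omega
        have : (eE n).symm w = (((eE n).symm v).1, ((eE n).symm v).2 + 1) := by
          rw [Prod.ext_iff]; exact ⟨hfst, h2⟩
        calc w = eE n ((eE n).symm w) := ((eE n).apply_symm_apply w).symm
          _ = _ := by rw [this]
  · rw [lineAdjMatrix n, AlgEquiv.spectrum_eq, spec_Am n hn]
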